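/- arXiv:2010.14760 — 2 statements merged into one kernel-verified Lean document; each statement's English description precedes it below -/
import Mathlib

section
/- Let (a_1,...,a_n) be positive integers with convergent denominators q_{n-1}, q_n given by the standard recursion, and let Ψ be a positive non-decreasing function. Then the set J_n(a_1,...,a_n) = ⋃_{a_{n+1} > Ψ(a_n q_{n-1})/a_n} I_{n+1}(a_1,...,a_n,a_{n+1}) has diameter at most 1/(Ψ(a_n q_{n-1}) · a_n · q_{n-1}²). -/
/-- The Gauss map `T(0) = 0`, `T(x) = 1/x (mod 1)`. -/
noncomputable def gaussT (x : ℝ) : ℝ := if x = 0 then 0 else Int.fract x⁻¹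

/-- The `n`-th continued fraction partial quotient of `x`, `aₙ(x) = ⌊1/T^(n-1)(x)⌋` (for `n ≥ 1`). -/
noncomputable def cfA (x : ℝ) (n : ℕ) : ℤ := ⌊(gaussT^[n - 1] x)⁻¹⌋

/-- The numerators `pₙ` of the continued fraction convergents of `x`. -/
noncomputable def cfP (x : ℝ) : ℕ → ℤ
  | 0 => 0
  | 1 => 1
  | n + 2 => cfA x (n + 2) * cfP x (n + 1) + cfP x n

/-- The denominators `qₙ` of the continued fraction convergents of `x`. -/
noncomputable def cfQ (x : ℝ) : ℕ → ℤ
  | 0 => 1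
  | 1 => cfA x 1
  | n + 2 => cfA x (n + 2) * cfQ x (n + 1) + cfQ x n

lemma gaussT_mem (x : ℝ) : gaussT x ∈ Set.Ico (0:ℝ) 1 := by
  unfold gaussT
  split
  · exact ⟨le_refl _, one_pos⟩
  · exact ⟨Int.fract_nonneg _, Int.fract_lt_one _⟩

lemma gaussT_iter_mem {x : ℝ} (hx : x ∈ Set.Ico (0:ℝ) 1) (k : ℕ) :
    gaussT^[k] x ∈ Set.Ico (0:ℝ) 1 := by
  induction k with
  | zero => simpa using hx
  | succ k ih => rw [Function.iterate_succ_apply']; exact gaussT_mem _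

lemma gauss_step {t : ℝ} (ht : t ∈ Set.Ico (0:ℝ) 1) (h1 : 1 ≤ ⌊t⁻¹⌋) :
    0 < t ∧ t * ((⌊t⁻¹⌋ : ℝ) + gaussT t) = 1 := by
  have htpos : 0 < t := by
    rcases eq_or_lt_of_le ht.1 with h | h
    · exfalso; rw [← h] at h1; norm_num at h1
    · exact h
  have hne : t ≠ 0 := ne_of_gt htpos
  refine ⟨htpos, ?_⟩
  rw [gaussT, if_neg hne, Int.fract]
  have h2 : ((⌊t⁻¹⌋ : ℝ)) + (t⁻¹ - (⌊t⁻¹⌋ : ℝ)) = t⁻¹ := by ring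
  rw [h2, mul_inv_cancel₀ hne]

lemma cf_det (x : ℝ) : ∀ k, cfP x (k+1) * cfQ x k - cfP x k * cfQ x (k+1) = (-1)^k := by
  intro k
  induction k with
  | zero => simp [cfP, cfQ]
  | succ k ih =>
    have eP : cfP x (k+2) = cfA x (k+2) * cfP x (k+1) + cfP x k := rfl
    have eQ : cfQ x (k+2) = cfA x (k+2) * cfQ x (k+1) + cfQ x k := rfl
    rw [show k+1+1 = k+2 from rfl, eP, eQ]
    linear_combination (-1 : ℤ) * ih

lemma cf_identity (x : ℝ) (hx : x ∈ Set.Ico (0:ℝ) 1) :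
    ∀ k, 1 ≤ k → (∀ i, i < k → 1 ≤ cfA x (i + 1)) →
    x * ((cfQ x k : ℝ) + gaussT^[k] x * (cfQ x (k - 1) : ℝ))
      = (cfP x k : ℝ) + gaussT^[k] x * (cfP x (k - 1) : ℝ) := by
  intro k
  induction k with
  | zero => intro h; exact absurd h (by norm_num)
  | succ k ih =>
    intro _ hpos
    rcases Nat.eq_zero_or_pos k with hk0 | hk1
    · subst hk0
      have h1 : 1 ≤ ⌊x⁻¹⌋ := by
        have := hpos 0 (by norm_num)
        simpa [cfA] using this
      obtain ⟨hxpos, hstep⟩ := gauss_step hx h1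
      have hA : cfA x 1 = ⌊x⁻¹⌋ := by simp [cfA]
      have hit1 : gaussT^[0+1] x = gaussT x := by simp
      simp only [cfQ, cfP, hA, hit1]
      push_cast
      have hQ0 : ((cfQ x 0 : ℤ) : ℝ) = 1 := by simp [cfQ]
      have hP0 : ((cfP x 0 : ℤ) : ℝ) = 0 := by simp [cfP]
      linear_combination hstep + (x * gaussT x) * hQ0 - gaussT x * hP0
    · obtain ⟨m, rfl⟩ : ∃ m, k = m + 1 := ⟨k - 1, by omega⟩
      have ihh := ih (by omega) (fun i hi => hpos i (by omega))
      have ht : gaussT^[m+1] x ∈ Set.Ico (0:ℝ) 1 := gaussT_iter_mem hx _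
      have hA : cfA x (m+2) = ⌊(gaussT^[m+1] x)⁻¹⌋ := by simp [cfA]
      have h1 : 1 ≤ ⌊(gaussT^[m+1] x)⁻¹⌋ := by rw [← hA]; exact hpos (m+1) (by omega)
      obtain ⟨htpos, hstep⟩ := gauss_step ht h1
      have hit : gaussT^[m+2] x = gaussT (gaussT^[m+1] x) := Function.iterate_succ_apply' _ _ _
      have eP : cfP x (m+2) = cfA x (m+2) * cfP x (m+1) + cfP x m := rfl
      have eQ : cfQ x (m+2) = cfA x (m+2) * cfQ x (m+1) + cfQ x m := rfl
      rw [show (m+2) - 1 = m+1 from rfl, hit, eP, eQ, hA]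
      rw [show (m+1) - 1 = m from rfl] at ihh
      push_cast at ihh ⊢
      have hne : gaussT^[m+1] x ≠ 0 := ne_of_gt htpos
      apply mul_left_cancel₀ hne
      linear_combination ihh + (x * (cfQ x (m+1) : ℝ) - (cfP x (m+1) : ℝ)) * hstep

lemma cfQ_eq (x : ℝ) (n : ℕ) (a : ℕ → ℤ) (q : ℕ → ℤ) (hq0 : q 0 = 1) (hq1 : q 1 = a 1)
    (hq : ∀ m, 1 ≤ m → m + 1 ≤ n → q (m + 1) = a (m + 1) * q m + q (m - 1))
    (hxa : ∀ i, 1 ≤ i → i ≤ n → cfA x i = a i) :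
    ∀ m, m ≤ n → cfQ x m = q m := by
  have H : ∀ m, (m ≤ n → cfQ x m = q m) ∧ (m + 1 ≤ n → cfQ x (m+1) = q (m+1)) := by
    intro m
    induction m with
    | zero =>
      constructor
      · intro _; simp [cfQ, hq0]
      · intro h; simp [cfQ, hq1, hxa 1 le_rfl h]
    | succ m ih =>
      refine ⟨ih.2, ?_⟩
      intro h
      have e : cfQ x (m+2) = cfA x (m+2) * cfQ x (m+1) + cfQ x m := rfl
      rw [e, hxa (m+2) (by omega) h, ih.1 (by omega), ih.2 (by omega)]
      have h2 := hq (m+1) (by omega) (by omega)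
      simp only [Nat.add_sub_cancel] at h2
      exact h2.symm
  exact fun m hm => (H m).1 hm

lemma cfP_eq (x x' : ℝ) (n : ℕ) (a : ℕ → ℤ)
    (hxa : ∀ i, 1 ≤ i → i ≤ n → cfA x i = a i)
    (hx'a : ∀ i, 1 ≤ i → i ≤ n → cfA x' i = a i) :
    ∀ m, m ≤ n → cfP x m = cfP x' m := by
  have H : ∀ m, (m ≤ n → cfP x m = cfP x' m) ∧ (m + 1 ≤ n → cfP x (m+1) = cfP x' (m+1)) := by
    intro m
    induction m with
    | zero => exact ⟨fun _ => rfl, fun _ => rfl⟩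
    | succ m ih =>
      refine ⟨ih.2, ?_⟩
      intro h
      have e : cfP x (m+2) = cfA x (m+2) * cfP x (m+1) + cfP x m := rfl
      have e' : cfP x' (m+2) = cfA x' (m+2) * cfP x' (m+1) + cfP x' m := rfl
      rw [e, e', hxa (m+2) (by omega) h, hx'a (m+2) (by omega) h,
        ih.1 (by omega), ih.2 (by omega)]
  exact fun m hm => (H m).1 hm

/-- The set `Jₙ(a₁,…,aₙ) = ⋃_{aₙ₊₁ > Ψ(aₙqₙ₋₁)/aₙ} Iₙ₊₁(a₁,…,aₙ,aₙ₊₁)` has diameter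
at most `1/(Ψ(aₙqₙ₋₁)·aₙ·qₙ₋₁²)`. -/
theorem Jn_diam_bound (n : ℕ) (hn : 1 ≤ n) (a : ℕ → ℤ)
    (ha : ∀ i, 1 ≤ i → i ≤ n → 1 ≤ a i)
    (q : ℕ → ℤ) (hq0 : q 0 = 1) (hq1 : q 1 = a 1)
    (hq : ∀ m, 1 ≤ m → m + 1 ≤ n → q (m + 1) = a (m + 1) * q m + q (m - 1))
    (Ψ : ℝ → ℝ) (hΨmono : Monotone Ψ) (hΨpos : ∀ t : ℝ, 0 < Ψ t) :
    Metric.diam {x ∈ Set.Ico (0 : ℝ) 1 | (∀ i, 1 ≤ i → i ≤ n → cfA x i = a i) ∧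
        (cfA x (n + 1) : ℝ) > Ψ ((a n : ℝ) * (q (n - 1) : ℝ)) / (a n : ℝ)} ≤
      1 / (Ψ ((a n : ℝ) * (q (n - 1) : ℝ)) * (a n : ℝ) * (q (n - 1) : ℝ) ^ 2) := by
  have hqpos : ∀ m, m ≤ n → 1 ≤ q m := by
    have H : ∀ m, (m ≤ n → 1 ≤ q m) ∧ (m + 1 ≤ n → 1 ≤ q (m+1)) := by
      intro m
      induction m with
      | zero =>
        constructor
        · intro _; rw [hq0]
        · intro h; rw [hq1]; exact ha 1 le_rfl h
      | succ m ih =>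
        refine ⟨ih.2, ?_⟩
        intro h
        have h2 := hq (m+1) (by omega) (by omega)
        simp only [Nat.add_sub_cancel] at h2
        have h3 := ih.1 (by omega)
        have h4 := ih.2 (by omega)
        have h5 := ha (m+2) (by omega) h
        nlinarith
    exact fun m hm => (H m).1 hm
  set Ψ₀ := Ψ ((a n : ℝ) * (q (n - 1) : ℝ)) with hΨ₀def
  have hΨ₀ : 0 < Ψ₀ := hΨpos _
  have hanZ : (1:ℤ) ≤ a n := ha n hn le_rfl
  have han : (1:ℝ) ≤ (a n : ℝ) := by exact_mod_cast hanZ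
  have hanpos : (0:ℝ) < (a n : ℝ) := by linarith
  have hqm1Z : (1:ℤ) ≤ q (n-1) := hqpos (n-1) (by omega)
  have hqm1 : (1:ℝ) ≤ (q (n-1) : ℝ) := by exact_mod_cast hqm1Z
  have hqnZ : a n * q (n-1) ≤ q n := by
    by_cases h1 : n = 1
    · subst h1; simp [hq0, hq1]
    · obtain ⟨m, rfl⟩ : ∃ m, n = m + 2 := ⟨n - 2, by omega⟩
      have h2 := hqpos m (by omega)
      have heq := hq (m+1) (by omega) (by omega)
      simp only [Nat.add_sub_cancel] at heq
      show a (m+2) * q (m+1) ≤ q (m+2)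
      linarith
  have hQnR : (a n : ℝ) * (q (n-1) : ℝ) ≤ (q n : ℝ) := by exact_mod_cast hqnZ
  have hQnpos : (0:ℝ) < (q n : ℝ) := by nlinarith
  have main : ∀ z : ℝ, z ∈ Set.Ico (0:ℝ) 1 → (∀ i, 1 ≤ i → i ≤ n → cfA z i = a i) →
      (Ψ₀ / (a n : ℝ) < (cfA z (n+1) : ℝ)) →
      0 ≤ gaussT^[n] z ∧ gaussT^[n] z * Ψ₀ < (a n : ℝ) ∧
      z * ((q n : ℝ) + gaussT^[n] z * (q (n-1) : ℝ))
        = (cfP z n : ℝ) + gaussT^[n] z * (cfP z (n-1) : ℝ) := by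
    intro z hz hza hzlast
    have htmem : gaussT^[n] z ∈ Set.Ico (0:ℝ) 1 := gaussT_iter_mem hz n
    have hAfloor : cfA z (n+1) = ⌊(gaussT^[n] z)⁻¹⌋ := by simp [cfA]
    have hA1 : (1:ℤ) ≤ cfA z (n+1) := by
      have h0 : (0:ℝ) < Ψ₀ / (a n : ℝ) := div_pos hΨ₀ hanpos
      have h0' : (0:ℝ) < (cfA z (n+1) : ℝ) := lt_trans h0 hzlast
      have : (0:ℤ) < cfA z (n+1) := by exact_mod_cast h0'
      omega
    obtain ⟨htpos, hstep⟩ := gauss_step htmem (by rw [← hAfloor]; exact hA1)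
    have hfl : ((⌊(gaussT^[n] z)⁻¹⌋ : ℤ) : ℝ) ≤ (gaussT^[n] z)⁻¹ := Int.floor_le _
    rw [hAfloor] at hzlast
    have h5 : Ψ₀ / (a n : ℝ) < (gaussT^[n] z)⁻¹ := lt_of_lt_of_le hzlast hfl
    have h6 : Ψ₀ < (gaussT^[n] z)⁻¹ * (a n : ℝ) := (div_lt_iff₀ hanpos).mp h5
    have h7 : gaussT^[n] z * Ψ₀ < (a n : ℝ) := by
      have h8 := mul_lt_mul_of_pos_left h6 htpos
      rwa [← mul_assoc, mul_inv_cancel₀ (ne_of_gt htpos), one_mul] at h8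
    have hid := cf_identity z hz n hn (fun i hi => by
      rw [hza (i+1) (by omega) (by omega)]; exact ha (i+1) (by omega) (by omega))
    rw [cfQ_eq z n a q hq0 hq1 hq hza n le_rfl,
      cfQ_eq z n a q hq0 hq1 hq hza (n-1) (by omega)] at hid
    exact ⟨le_of_lt htpos, h7, hid⟩
  have hqm1pos : (0:ℝ) < (q (n-1) : ℝ) := by linarith
  have hbound : (0:ℝ) ≤ 1 / (Ψ₀ * (a n : ℝ) * (q (n-1) : ℝ) ^ 2) :=
    div_nonneg zero_le_one (le_of_lt (mul_pos (mul_pos hΨ₀ hanpos) (pow_pos hqm1pos 2)))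
  apply Metric.diam_le_of_forall_dist_le hbound
  intro x hx x' hx'
  simp only [Set.mem_setOf_eq] at hx hx'
  obtain ⟨hx01, hxa, hxlast⟩ := hx
  obtain ⟨hx'01, hx'a, hx'last⟩ := hx'
  obtain ⟨hy0, hyb, hxid⟩ := main x hx01 hxa hxlast
  obtain ⟨hy'0, hy'b, hx'id⟩ := main x' hx'01 hx'a hx'last
  rw [← cfP_eq x x' n a hxa hx'a n le_rfl,
    ← cfP_eq x x' n a hxa hx'a (n-1) (by omega)] at hx'id
  rw [Real.dist_eq]
  set y := gaussT^[n] x with hydef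
  set y' := gaussT^[n] x' with hy'def
  set Pn := ((cfP x n : ℤ) : ℝ) with hPndef
  set Pm := ((cfP x (n-1) : ℤ) : ℝ) with hPmdef
  set Qn := ((q n : ℤ) : ℝ) with hQndef
  set Qm := ((q (n-1) : ℤ) : ℝ) with hQmdef
  set A := ((a n : ℤ) : ℝ) with hAdef
  -- determinant
  have hdet0 := cf_det x (n-1)
  rw [show n - 1 + 1 = n from by omega] at hdet0
  rw [cfQ_eq x n a q hq0 hq1 hq hxa n le_rfl,
    cfQ_eq x n a q hq0 hq1 hq hxa (n-1) (by omega)] at hdet0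
  have hdetR : Pn * Qm - Pm * Qn = 1 ∨ Pn * Qm - Pm * Qn = -1 := by
    rcases neg_one_pow_eq_or ℤ (n-1) with h | h <;> rw [h] at hdet0
    · left; rw [hPndef, hPmdef, hQndef, hQmdef]; exact_mod_cast hdet0
    · right; rw [hPndef, hPmdef, hQndef, hQmdef]; exact_mod_cast hdet0
  clear_value y y' Pn Pm Qn Qm A Ψ₀
  clear main hxlast hx'last hxa hx'a hx01 hx'01 hq ha hqpos hΨpos hΨmono hq0 hq1
  clear hqnZ hqm1Z hanZ hdet0 hydef hy'def hPndef hPmdef hQndef hQmdef hAdef hΨ₀def hbound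
  have hQmpos : (0:ℝ) < Qm := by linarith
  have hD : (0:ℝ) < Qn + y * Qm := by nlinarith
  have hD' : (0:ℝ) < Qn + y' * Qm := by nlinarith
  have hkey : (x - x') * ((Qn + y * Qm) * (Qn + y' * Qm)) = (y' - y) * (Pn * Qm - Pm * Qn) := by
    linear_combination (Qn + y' * Qm) * hxid - (Qn + y * Qm) * hx'id
  have habs : |x - x'| * ((Qn + y * Qm) * (Qn + y' * Qm)) = |y' - y| := by
    have h9 := congrArg abs hkey
    rw [abs_mul, abs_of_pos (mul_pos hD hD'), abs_mul] at h9
    rcases hdetR with h | h <;> rw [h] at h9 <;> simpa using h9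
  have h8 : |y' - y| * Ψ₀ ≤ A := by
    rcases abs_cases (y' - y) with ⟨h, _⟩ | ⟨h, _⟩ <;> rw [h] <;> nlinarith
  have h9 : A^2 * Qm^2 ≤ (Qn + y * Qm) * (Qn + y' * Qm) := by
    have hAQm : (0:ℝ) ≤ A * Qm := by nlinarith
    have h9a : (A * Qm) * (A * Qm) ≤ Qn * Qn :=
      mul_le_mul hQnR hQnR hAQm (le_of_lt hQnpos)
    nlinarith [h9a, mul_nonneg (mul_nonneg hy0 hQmpos.le) hQnpos.le,
      mul_nonneg (mul_nonneg hy'0 hQmpos.le) hQnpos.le,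
      mul_nonneg (mul_nonneg hy0 hy'0) (mul_nonneg hQmpos.le hQmpos.le)]
  rw [le_div_iff₀ (mul_pos (mul_pos hΨ₀ hanpos) (pow_pos hQmpos 2))]
  have h10 : |x - x'| * (Ψ₀ * A * Qm ^ 2) * A ≤ A := by
    have e1 : |x - x'| * (Ψ₀ * A * Qm ^ 2) * A = (|x - x'| * Ψ₀) * (A^2 * Qm^2) := by ring
    rw [e1]
    calc (|x - x'| * Ψ₀) * (A^2 * Qm^2)
        ≤ (|x - x'| * Ψ₀) * ((Qn + y * Qm) * (Qn + y' * Qm)) :=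
          mul_le_mul_of_nonneg_left h9 (mul_nonneg (abs_nonneg _) (le_of_lt hΨ₀))
      _ = |y' - y| * Ψ₀ := by linear_combination Ψ₀ * habs
      _ ≤ A := h8
  have h11 : |x - x'| * (Ψ₀ * A * Qm ^ 2) * A ≤ 1 * A := by linarith
  exact le_of_mul_le_mul_right h11 hanpos
end

section
/- Let ψ: ℝ_+ → ℝ_+ be non-increasing with tψ(t) < 1 for large t, and Ψ(t) = tψ(t)/(1 − tψ(t)). For irrational x ∈ [0,1), x ∈ D(ψ) if and only if |q_{n-1}x − p_{n-1}| < ψ(q_n) for all sufficiently large n. -/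
noncomputable def cfX (x : ℝ) (n : ℕ) : ℝ := gaussT^[n] x

section CF
variable {x : ℝ} (hx : x ∈ Set.Ioo (0:ℝ) 1) (hirr : Irrational x)

lemma gauss_step_s17 {y : ℝ} (hy : y ∈ Set.Ioo (0:ℝ) 1) (hyirr : Irrational y) :
    gaussT y ∈ Set.Ioo (0:ℝ) 1 ∧ Irrational (gaussT y) := by
  have hy0 : y ≠ 0 := ne_of_gt hy.1
  have h1 : gaussT y = Int.fract y⁻¹ := if_neg hy0
  have hfr : Irrational (Int.fract y⁻¹) := by
    rw [Int.fract]; exact hyirr.inv.sub_intCast _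
  have hne : Int.fract y⁻¹ ≠ 0 := by
    intro h; rw [h] at hfr; exact hfr.ne_int 0 (by simp)
  have h01 : Int.fract y⁻¹ ∈ Set.Ioo (0:ℝ) 1 :=
    ⟨lt_of_le_of_ne (Int.fract_nonneg _) (Ne.symm hne), Int.fract_lt_one _⟩
  rw [h1]; exact ⟨h01, hfr⟩

include hx hirr in
lemma cfX_mem : ∀ n, cfX x n ∈ Set.Ioo (0:ℝ) 1 ∧ Irrational (cfX x n) := by
  intro n
  induction n with
  | zero => exact ⟨hx, hirr⟩
  | succ n ih =>
      have : cfX x (n+1) = gaussT (cfX x n) := by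
        simp [cfX, Function.iterate_succ_apply']
      rw [this]; exact gauss_step_s17 ih.1 ih.2

lemma cfX_succ (n : ℕ) (hne : cfX x n ≠ 0) :
    cfX x (n+1) = Int.fract (cfX x n)⁻¹ := by
  have : cfX x (n+1) = gaussT (cfX x n) := by
    simp [cfX, Function.iterate_succ_apply']
  rw [this, gaussT, if_neg hne]

lemma cfA_eq (n : ℕ) : cfA x (n+1) = ⌊(cfX x n)⁻¹⌋ := rfl

include hx hirr in
lemma inv_cfX (n : ℕ) : (cfX x n)⁻¹ = cfA x (n+1) + cfX x (n+1) := by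
  have h := cfX_mem hx hirr n
  rw [cfX_succ n (ne_of_gt h.1.1), cfA_eq, Int.fract]
  ring

include hx hirr in
lemma one_lt_inv_cfX (n : ℕ) : 1 < (cfX x n)⁻¹ := by
  have h := (cfX_mem hx hirr n).1
  exact (one_lt_inv₀ h.1).mpr h.2

include hx hirr in
lemma cfA_pos (n : ℕ) : 1 ≤ cfA x (n+1) := by
  rw [cfA_eq]
  exact Int.le_floor.mpr (by exact_mod_cast (one_lt_inv_cfX hx hirr n).le)

include hx hirr in
lemma cfQ_one_le : ∀ n, 1 ≤ cfQ x n ∧ cfQ x n ≤ cfQ x (n+1) := by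
  intro n
  induction n with
  | zero =>
      refine ⟨le_refl _, ?_⟩
      show (1:ℤ) ≤ cfQ x 1
      exact cfA_pos hx hirr 0
  | succ n ih =>
      constructor
      · exact le_trans ih.1 ih.2
      · show cfQ x (n+1) ≤ cfA x (n+2) * cfQ x (n+1) + cfQ x n
        have h1 := cfA_pos hx hirr (n+1)
        nlinarith [ih.1, ih.2]

include hx hirr in
lemma le_cfQ : ∀ n : ℕ, (n : ℤ) ≤ cfQ x n := by
  have key : ∀ n, ((n+1 : ℕ) : ℤ) ≤ cfQ x (n+1) := by
    intro n
    induction n with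
    | zero => simpa [cfQ] using (cfQ_one_le hx hirr 0).2
    | succ n ih =>
        show ((n+2:ℕ) : ℤ) ≤ cfA x (n+2) * cfQ x (n+1) + cfQ x n
        have h1 := cfA_pos hx hirr (n+1)
        have h2 := (cfQ_one_le hx hirr n).1
        have h3 := (cfQ_one_le hx hirr (n+1)).1
        push_cast at ih ⊢
        nlinarith
  intro n
  cases n with
  | zero => simp [cfQ]
  | succ n => exact key n

set_option linter.unusedSectionVars false in
lemma cfdet : ∀ n, cfQ x (n+1) * cfP x n - cfP x (n+1) * cfQ x n = (-1)^(n+1) := by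
  intro n
  induction n with
  | zero => simp [cfQ, cfP]
  | succ n ih =>
      have e1 : cfQ x (n+2) = cfA x (n+2) * cfQ x (n+1) + cfQ x n := rfl
      have e2 : cfP x (n+2) = cfA x (n+2) * cfP x (n+1) + cfP x n := rfl
      rw [show n+1+1 = n+2 from rfl, e1, e2, pow_succ]
      linear_combination (-1 : ℤ) * ih

include hx hirr in
lemma E_eq : ∀ n, (cfQ x n : ℝ) * x - cfP x n = (-1)^n * ∏ i ∈ Finset.range (n+1), cfX x i := by
  have key : ∀ n, ((cfQ x n : ℝ) * x - cfP x n = (-1)^n * ∏ i ∈ Finset.range (n+1), cfX x i)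
      ∧ ((cfQ x (n+1) : ℝ) * x - cfP x (n+1) = (-1)^(n+1) * ∏ i ∈ Finset.range (n+2), cfX x i) := by
    intro n
    induction n with
    | zero =>
        constructor
        · simp [cfQ, cfP, cfX]
        · have h := inv_cfX hx hirr 0
          have hx0 : cfX x 0 ≠ 0 := ne_of_gt (cfX_mem hx hirr 0).1.1
          have hX0 : cfX x 0 = x := rfl
          have h1 : x * ((cfA x 1 : ℝ) + cfX x 1) = 1 := by
            rw [show ((cfA x 1 : ℝ) + cfX x 1) = (cfX x 0)⁻¹ from h.symm, ← hX0]
            exact mul_inv_cancel₀ hx0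
          simp only [cfQ, cfP, Finset.prod_range_succ, Finset.prod_range_one, hX0]
          push_cast
          linear_combination h1
    | succ n ih =>
        refine ⟨ih.2, ?_⟩
        have h := inv_cfX hx hirr (n+1)
        have hne : cfX x (n+1) ≠ 0 := ne_of_gt (cfX_mem hx hirr (n+1)).1.1
        have h1 : cfX x (n+1) * (cfX x (n+1))⁻¹ = 1 := mul_inv_cancel₀ hne
        rw [h] at h1
        have e1 : cfQ x (n+2) = cfA x (n+2) * cfQ x (n+1) + cfQ x n := rfl
        have e2 : cfP x (n+2) = cfA x (n+2) * cfP x (n+1) + cfP x n := rfl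
        have h1' : cfX x (n+1) * ((cfA x (n+2) : ℝ) + cfX x (n+2)) = 1 := h1
        have hR : (∏ i ∈ Finset.range (n+2), cfX x i)
            = (∏ i ∈ Finset.range (n+1), cfX x i) * cfX x (n+1) :=
          Finset.prod_range_succ (cfX x) (n+1)
        rw [show n+1+1 = n+2 from rfl, e1, e2, show (n+2)+1 = (n+2)+1 from rfl,
          Finset.prod_range_succ]
        push_cast
        linear_combination (cfA x (n+2) : ℝ) * ih.2 + ih.1
          - (-1:ℝ)^n * (∏ i ∈ Finset.range (n+1), cfX x i) * h1'
          - (-1:ℝ)^n * ((cfA x (n+2) : ℝ) + cfX x (n+2)) * hR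
  exact fun n => (key n).1

include hx hirr in
lemma prodX_pos (n : ℕ) : 0 < ∏ i ∈ Finset.range (n+1), cfX x i :=
  Finset.prod_pos fun i _ => (cfX_mem hx hirr i).1.1

include hx hirr in
lemma E_mul_neg (n : ℕ) :
    ((cfQ x n : ℝ) * x - cfP x n) * ((cfQ x (n+1) : ℝ) * x - cfP x (n+1)) < 0 := by
  rw [E_eq hx hirr n, E_eq hx hirr (n+1)]
  have h1 := prodX_pos hx hirr n
  have h2 := prodX_pos hx hirr (n+1)
  have hs : ((-1:ℝ)^n * ((-1:ℝ)^(n+1))) = -1 := by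
    rw [← pow_add]
    exact Odd.neg_one_pow ⟨n, by ring⟩
  have key : ((-1:ℝ)^n * ∏ i ∈ Finset.range (n+1), cfX x i)
      * ((-1:ℝ)^(n+1) * ∏ i ∈ Finset.range (n+1+1), cfX x i)
      = -((∏ i ∈ Finset.range (n+1), cfX x i) * (∏ i ∈ Finset.range (n+1+1), cfX x i)) := by
    linear_combination ((∏ i ∈ Finset.range (n+1), cfX x i)
      * (∏ i ∈ Finset.range (n+1+1), cfX x i)) * hs
  rw [key]
  exact neg_lt_zero.mpr (mul_pos h1 h2)

include hx hirr in
lemma E_pos_abs (n : ℕ) : 0 < |(cfQ x n : ℝ) * x - cfP x n| := by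
  rw [E_eq hx hirr n, abs_mul, abs_pow, abs_neg, abs_one, one_pow, one_mul]
  rw [abs_of_pos (prodX_pos hx hirr n)]
  exact prodX_pos hx hirr n

lemma abs_le_abs_add' {a b : ℝ} (h : 0 ≤ a * b) : |a| ≤ |a + b| := by
  nlinarith [abs_nonneg a, abs_nonneg (a+b), sq_abs a, sq_abs (a+b), sq_nonneg b]


include hx hirr in
lemma best_approx (n : ℕ) (p q : ℤ) (hq1 : 1 ≤ q) (hq2 : q < cfQ x (n+1)) :
    |(cfQ x n : ℝ) * x - cfP x n| ≤ |(q : ℝ) * x - p| := by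
  have det := cfdet (x := x) n
  have hsign : ((-1:ℤ)^n) * ((-1:ℤ)^(n+1)) = -1 := by
    rw [← pow_add]; exact Odd.neg_one_pow ⟨n, by ring⟩
  set A := cfQ x n with hA
  set B := cfQ x (n+1) with hB
  set C := cfP x n with hC
  set D := cfP x (n+1) with hD
  set μ : ℤ := (-1)^n * (q * D - p * B) with hμ
  set ν : ℤ := (-1)^n * (A * p - C * q) with hν
  have hqe : q = μ * A + ν * B := by
    rw [hμ, hν]
    linear_combination ((-1:ℤ)^n) * q * det + q * hsign
  have hpe : p = μ * C + ν * D := by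
    rw [hμ, hν]
    linear_combination ((-1:ℤ)^n) * p * det + p * hsign
  have hA1 : 1 ≤ A := (cfQ_one_le hx hirr n).1
  have hB1 : 1 ≤ B := (cfQ_one_le hx hirr (n+1)).1
  have hqr : (q : ℝ) = μ * A + ν * B := by exact_mod_cast congrArg (Int.cast : ℤ → ℝ) hqe
  have hpr : (p : ℝ) = μ * C + ν * D := by exact_mod_cast congrArg (Int.cast : ℤ → ℝ) hpe
  have hE : (q : ℝ) * x - p = μ * ((A:ℝ) * x - C) + ν * ((B:ℝ) * x - D) := by
    rw [hqr, hpr]; ring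
  by_cases hν0 : ν = 0
  · have hμ0 : μ ≠ 0 := by
      intro h; rw [h, hν0] at hqe; simp at hqe; omega
    have h1μ : (1:ℝ) ≤ |(μ:ℝ)| := by
      have := Int.one_le_abs hμ0
      exact_mod_cast this
    rw [hE, hν0]
    push_cast
    rw [zero_mul, add_zero, abs_mul]
    exact le_mul_of_one_le_left (abs_nonneg _) h1μ
  · have hμ0 : μ ≠ 0 := by
      intro h
      rw [h] at hqe; simp at hqe
      rcases lt_or_gt_of_ne hν0 with hn | hn
      · nlinarith
      · nlinarith
    have hμν : μ * ν < 0 := by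
      rcases lt_or_gt_of_ne hν0 with hn | hn
      · rcases lt_or_gt_of_ne hμ0 with hm | hm
        · nlinarith
        · exact mul_neg_of_pos_of_neg hm hn
      · rcases lt_or_gt_of_ne hμ0 with hm | hm
        · exact mul_neg_of_neg_of_pos hm hn
        · nlinarith
    have hμνr : (μ:ℝ) * ν < 0 := by exact_mod_cast hμν
    have hEE := E_mul_neg hx hirr n
    rw [← hA, ← hB, ← hC, ← hD] at hEE
    have hsame : 0 ≤ (μ * ((A:ℝ) * x - C)) * (ν * ((B:ℝ) * x - D)) := by nlinarith
    have h1μ : (1:ℝ) ≤ |(μ:ℝ)| := by exact_mod_cast Int.one_le_abs hμ0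
    calc |(A:ℝ) * x - C| ≤ |(μ:ℝ)| * |(A:ℝ) * x - C| :=
          le_mul_of_one_le_left (abs_nonneg _) h1μ
      _ = |(μ:ℝ) * ((A:ℝ) * x - C)| := (abs_mul _ _).symm
      _ ≤ |(μ:ℝ) * ((A:ℝ) * x - C) + (ν:ℝ) * ((B:ℝ) * x - D)| := abs_le_abs_add' hsame
      _ = |(q:ℝ) * x - p| := by rw [← hE]

end CF


/-- `x` is `ψ`-Dirichlet improvable: there exists `N` such that for all `t > N`,
the system `|qx − p| < ψ(t)`, `|q| < t` has a nontrivial integer solution. -/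
def DirichletImprovable (ψ : ℝ → ℝ) (x : ℝ) : Prop :=
  ∃ N : ℝ, ∀ t > N, ∃ p q : ℤ, ¬(p = 0 ∧ q = 0) ∧ |(q : ℝ) * x - (p : ℝ)| < ψ t ∧ |(q : ℝ)| < t

/-- For irrational `x ∈ [0,1)`, `x ∈ D(ψ)` if and only if
`|qₙ₋₁x − pₙ₋₁| < ψ(qₙ)` for all sufficiently large `n`. -/
theorem dirichlet_improvable_iff (ψ : ℝ → ℝ) (hψpos : ∀ t > (0 : ℝ), 0 < ψ t)
    (hψmono : ∀ s t : ℝ, 0 < s → s ≤ t → ψ t ≤ ψ s)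
    (hsmall : ∃ T : ℝ, ∀ t ≥ T, t * ψ t < 1)
    (x : ℝ) (hx : x ∈ Set.Ico (0 : ℝ) 1) (hirr : Irrational x) :
    DirichletImprovable ψ x ↔
      ∃ N : ℕ, ∀ n ≥ N, 1 ≤ n →
        |(cfQ x (n - 1) : ℝ) * x - (cfP x (n - 1) : ℝ)| < ψ (cfQ x n) := by
  have hx0 : x ≠ 0 := by simpa using hirr.ne_int 0
  have hxI : x ∈ Set.Ioo (0:ℝ) 1 := ⟨hx.1.lt_of_ne (Ne.symm hx0), hx.2⟩
  have hq1R : ∀ m : ℕ, (1:ℝ) ≤ (cfQ x m : ℝ) := fun m => by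
    exact_mod_cast (cfQ_one_le hxI hirr m).1
  have hnqR : ∀ m : ℕ, (m : ℝ) ≤ (cfQ x m : ℝ) := fun m => by
    exact_mod_cast le_cfQ hxI hirr m
  constructor
  · rintro ⟨Nr, hNr⟩
    obtain ⟨T, hT⟩ := hsmall
    refine ⟨⌈max Nr T⌉₊ + 1, ?_⟩
    intro n hn h1n
    have hnN : ((⌈max Nr T⌉₊ + 1 : ℕ) : ℝ) ≤ (n:ℝ) := by exact_mod_cast hn
    have hceil := Nat.le_ceil (max Nr T)
    have hgt : max Nr T < (cfQ x n : ℝ) := by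
      have h2 := hnqR n
      push_cast at hnN
      linarith
    have hQT : T ≤ (cfQ x n : ℝ) := le_trans (le_max_right _ _) (le_of_lt hgt)
    have hQN : (cfQ x n : ℝ) > Nr := lt_of_le_of_lt (le_max_left _ _) hgt
    obtain ⟨p, q, hnz, habs, hqlt⟩ := hNr _ hQN
    have hψq : ψ (cfQ x n) < 1 := by
      have h := hT _ hQT
      have hp := hψpos (cfQ x n : ℝ) (by linarith [hq1R n])
      nlinarith [hq1R n]
    have hqne : q ≠ 0 := by
      rintro rfl
      have hp : p ≠ 0 := fun h => hnz ⟨h, rfl⟩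
      have h1 : (1:ℝ) ≤ |(p:ℝ)| := by exact_mod_cast Int.one_le_abs hp
      rw [Int.cast_zero, zero_mul, zero_sub, abs_neg] at habs
      linarith
    have hqZ : |q| < cfQ x n := by
      have h : ((|q| : ℤ) : ℝ) < ((cfQ x n : ℤ) : ℝ) := by rw [Int.cast_abs]; exact hqlt
      exact_mod_cast h
    have hqZ' : -cfQ x n < q ∧ q < cfQ x n := abs_lt.mp hqZ
    obtain ⟨m, rfl⟩ : ∃ m, n = m + 1 := ⟨n - 1, (Nat.succ_pred_eq_of_pos h1n).symm⟩
    rw [show (m + 1) - 1 = m from rfl]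
    rcases le_or_gt 1 q with hq1' | hq1'
    · exact lt_of_le_of_lt (best_approx hxI hirr m p q hq1' (hqZ'.2)) habs
    · have h1 : 1 ≤ -q := by omega
      have h2 : -q < cfQ x (m+1) := by have := hqZ'.1; omega
      have habs' : |((-q : ℤ) : ℝ) * x - ((-p : ℤ) : ℝ)| < ψ (cfQ x (m+1)) := by
        push_cast
        rw [show -(q:ℝ) * x - -(p:ℝ) = -((q:ℝ) * x - p) by ring, abs_neg]
        exact habs
      exact lt_of_le_of_lt (best_approx hxI hirr m (-p) (-q) h1 h2) habs'
  · rintro ⟨N, hN⟩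
    refine ⟨(cfQ x (N+1) : ℝ), ?_⟩
    intro t ht
    classical
    have ht0 : (0:ℝ) < t := lt_of_lt_of_le (by linarith [hq1R (N+1)]) (le_of_lt ht)
    have hle : N+1 ≤ ⌈t⌉₊ := by
      have h1 : ((N+1 : ℕ) : ℝ) < t := lt_of_le_of_lt (hnqR (N+1)) ht
      exact (Nat.lt_ceil.mpr h1).le
    set n := Nat.findGreatest (fun m => (cfQ x m : ℝ) < t) ⌈t⌉₊ with hn
    have hPn : (cfQ x n : ℝ) < t := Nat.findGreatest_spec (P := fun m => (cfQ x m : ℝ) < t) (m := N+1) hle ht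
    have hNn : N+1 ≤ n := Nat.le_findGreatest (P := fun m => (cfQ x m : ℝ) < t) (m := N+1) hle ht
    have hup : t ≤ (cfQ x (n+1) : ℝ) := by
      by_contra hcon
      push_neg at hcon
      have hb : n+1 ≤ ⌈t⌉₊ := by
        have h1 : ((n+1 : ℕ) : ℝ) < t := lt_of_le_of_lt (hnqR (n+1)) hcon
        exact (Nat.lt_ceil.mpr h1).le
      exact Nat.findGreatest_is_greatest (P := fun m => (cfQ x m : ℝ) < t) (Nat.lt_succ_self n) hb hcon
    refine ⟨cfP x n, cfQ x n, ?_, ?_, ?_⟩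
    · rintro ⟨-, hq0⟩
      have := (cfQ_one_le hxI hirr n).1
      omega
    · have h := hN (n+1) (by omega) (by omega)
      rw [show (n+1) - 1 = n from rfl] at h
      exact lt_of_lt_of_le h (hψmono t (cfQ x (n+1)) ht0 hup)
    · rw [abs_of_nonneg (by linarith [hq1R n])]
      exact hPn
end
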